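/- In the same 4-node two-chain Kripke model (a < b, c < d, b ⊩ p, d ⊩ q), every formula θ built from p, q, ⊤ using only ¬ and ∧ satisfies: if both b and d force θ, then both a and c force θ. Hence p ∨ q is not equivalent to any {¬, ∧, ⊤}-formula in Gödel–Dummett logic. -/
import Mathlib


inductive Fm (α : Type) : Type where
  | top  : Fm α
  | atom : α → Fm α
  | neg  : Fm α → Fm α
  | and  : Fm α → Fm α → Fm α
  | or   : Fm α → Fm α → Fm α
  | imp  : Fm α → Fm α → Fm α

structure KripkeModel (α : Type) : Type 1 where
  K : Type
  le : K → K → Prop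
  refl : ∀ k, le k k
  trans : ∀ {a b c}, le a b → le b c → le a c
  antisymm : ∀ {a b}, le a b → le b a → a = b
  val : K → α → Prop
  persist : ∀ {k k' p}, le k k' → val k p → val k' p

def force {α : Type} (M : KripkeModel α) : M.K → Fm α → Prop
  | _, .top => True
  | k, .atom p => M.val k p
  | k, .neg φ => ∀ k', M.le k k' → ¬ force M k' φ
  | k, .and φ ψ => force M k φ ∧ force M k ψ
  | k, .or φ ψ => force M k φ ∨ force M k ψ
  | k, .imp φ ψ => ∀ k', M.le k k' → force M k' φ → force M k' ψ

/-- Formulas built from atoms and ⊤ using only ¬ and ∧. -/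
def OnlyNegAnd {α : Type} : Fm α → Prop
  | .top => True
  | .atom _ => True
  | .neg φ => OnlyNegAnd φ
  | .and φ ψ => OnlyNegAnd φ ∧ OnlyNegAnd ψ
  | .or _ _ => False
  | .imp _ _ => False

/-- The 4-node Kripke model consisting of two disjoint chains a = 0 < b = 1 and
c = 2 < d = 3, where b forces only the atom p = 0 and d forces only q = 1. -/
def M16 : KripkeModel (Fin 2) where
  K := Fin 4
  le := fun x y => x = y ∨ (x = 0 ∧ y = 1) ∨ (x = 2 ∧ y = 3)
  refl := by decide
  trans := by decide
  antisymm := by decide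
  val := fun k p => (k = 1 ∧ p = 0) ∨ (k = 3 ∧ p = 1)
  persist := by decide

/-- A Kripke model is connected when any two nodes above a common node are
comparable. -/
def Connected {α : Type} (M : KripkeModel α) : Prop :=
  ∀ k k' k'' : M.K, M.le k k' → M.le k k'' → M.le k' k'' ∨ M.le k'' k'

theorem force_persist {α : Type} (M : KripkeModel α) (φ : Fm α) :
    ∀ {k k' : M.K}, M.le k k' → force M k φ → force M k' φ := by
  induction φ with
  | top => intro k k' _ _; trivial
  | atom p => intro k k' h hf; exact M.persist h hf
  | neg φ ih => intro k k' h hf k'' h' hφ; exact hf k'' (M.trans h h') hφ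
  | and φ ψ ih1 ih2 => intro k k' h hf; exact ⟨ih1 h hf.1, ih2 h hf.2⟩
  | or φ ψ ih1 ih2 =>
      intro k k' h hf
      cases hf with
      | inl hf => exact Or.inl (ih1 h hf)
      | inr hf => exact Or.inr (ih2 h hf)
  | imp φ ψ ih1 ih2 => intro k k' h hf k'' h' hφ; exact hf k'' (M.trans h h') hφ

theorem main_lemma : ∀ θ : Fm (Fin 2), OnlyNegAnd θ →
    force M16 (1 : Fin 4) θ → force M16 (3 : Fin 4) θ →
    force M16 (0 : Fin 4) θ ∧ force M16 (2 : Fin 4) θ := by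
  intro θ
  induction θ with
  | top => intro _ _ _; exact ⟨trivial, trivial⟩
  | atom p =>
      intro _ h1 h3
      exfalso
      simp only [force, M16] at h1 h3
      fin_cases p <;> simp_all
  | neg φ ih =>
      intro _ h1 h3
      have le01 : M16.le (0 : Fin 4) (1 : Fin 4) := Or.inr (Or.inl ⟨rfl, rfl⟩)
      have le23 : M16.le (2 : Fin 4) (3 : Fin 4) := Or.inr (Or.inr ⟨rfl, rfl⟩)
      constructor
      · intro k' hk' hφ
        rcases hk' with h | ⟨_, h⟩ | ⟨h, _⟩
        · subst h
          exact h1 (1 : Fin 4) (Or.inl rfl) (force_persist M16 φ le01 hφ)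
        · subst h
          exact h1 (1 : Fin 4) (Or.inl rfl) hφ
        · exact absurd h (by decide)
      · intro k' hk' hφ
        rcases hk' with h | ⟨h, _⟩ | ⟨_, h⟩
        · subst h
          exact h3 (3 : Fin 4) (Or.inl rfl) (force_persist M16 φ le23 hφ)
        · exact absurd h (by decide)
        · subst h
          exact h3 (3 : Fin 4) (Or.inl rfl) hφ
  | and φ ψ ih1 ih2 =>
      intro h h1 h3
      obtain ⟨a1, a2⟩ := ih1 h.1 h1.1 h3.1
      obtain ⟨b1, b2⟩ := ih2 h.2 h1.2 h3.2
      exact ⟨⟨a1, b1⟩, ⟨a2, b2⟩⟩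
  | or _ _ _ _ => intro h; exact absurd h (by simp [OnlyNegAnd])
  | imp _ _ _ _ => intro h; exact absurd h (by simp [OnlyNegAnd])

theorem or_not_definable_from_neg_and :
    (∀ θ : Fm (Fin 2), OnlyNegAnd θ →
        force M16 (1 : Fin 4) θ → force M16 (3 : Fin 4) θ →
        force M16 (0 : Fin 4) θ ∧ force M16 (2 : Fin 4) θ) ∧
    ¬ ∃ θ : Fm (Fin 2), OnlyNegAnd θ ∧
        ∀ (M : KripkeModel (Fin 2)), Fintype M.K → Connected M →
          ∀ k : M.K, (force M k θ ↔ force M k (Fm.or (Fm.atom 0) (Fm.atom 1))) := by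
  refine ⟨main_lemma, ?_⟩
  rintro ⟨θ, hθ, hdef⟩
  have hconn : Connected M16 := by
    show ∀ k k' k'' : Fin 4,
        (k = k' ∨ (k = 0 ∧ k' = 1) ∨ (k = 2 ∧ k' = 3)) →
        (k = k'' ∨ (k = 0 ∧ k'' = 1) ∨ (k = 2 ∧ k'' = 3)) →
        (k' = k'' ∨ (k' = 0 ∧ k'' = 1) ∨ (k' = 2 ∧ k'' = 3)) ∨
        (k'' = k' ∨ (k'' = 0 ∧ k' = 1) ∨ (k'' = 2 ∧ k' = 3))
    decide
  have hiff : ∀ k : Fin 4, force M16 k θ ↔ force M16 k (Fm.or (Fm.atom 0) (Fm.atom 1)) :=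
    hdef M16 (inferInstanceAs (Fintype (Fin 4))) hconn
  have h1 : force M16 (1 : Fin 4) θ := (hiff 1).mpr (Or.inl (by simp [M16, force]))
  have h3 : force M16 (3 : Fin 4) θ := (hiff 3).mpr (Or.inr (by simp [M16, force]))
  have h0 := (main_lemma θ hθ h1 h3).1
  have := (hiff 0).mp h0
  simp [force, M16] at this
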